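/- Let β be an irrational real number. If w is a β-Dyck word over the alphabet {N,E}, then sw_β(w) is also a β-Dyck word. -/

import Mathlib

inductive Letter : Type
  | N : Letter
  | E : Letter
deriving DecidableEq, Repr

/-- Weight of a step for slope `β`: a north step raises `y - βx` by `1`,
    an east step changes it by `-β`. -/
noncomputable def wtR (β : ℝ) : Letter → ℝ
  | Letter.N => 1
  | Letter.E => -β

/-- Pair each letter with the level `y - βx` of the endpoint of the corresponding
    step of `mkpath(w)`, starting from level `l` (so from `l = 0` at the origin). -/
noncomputable def lvlsR (β : ℝ) : ℝ → List Letter → List (Letter × ℝ)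
  | _, [] => []
  | l, c :: w => (c, l + wtR β c) :: lvlsR β (l + wtR β c) w

open Classical in
/-- `negBeforeR k k' = true` iff level `k` is swept before (or equals) level `k'`:
    negative levels first, in decreasing order, then nonnegative levels in
    decreasing order. -/
noncomputable def negBeforeR (k k' : ℝ) : Bool :=
  if k < 0 then (if k' < 0 then decide (k' ≤ k) else true)
  else (if k' < 0 then false else decide (k' ≤ k))

/-- The sweep map `sw_β`: the letters of `w` are listed by order of their step
    levels, negative levels first in decreasing order, then nonnegative levels in
    decreasing order (a stable sort by the level order). -/
noncomputable def sweepR (β : ℝ) (w : List Letter) : List Letter :=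
  ((lvlsR β 0 w).mergeSort (fun p q => negBeforeR p.2 q.2)).map Prod.fst

/-- `w` is a `β`-Dyck word iff every lattice point `(x,y)` visited by `mkpath(w)`
    satisfies `y ≥ βx`, i.e. all step levels are nonnegative
    (the origin has level `0 ≥ 0`). -/
def IsDyckWordR (β : ℝ) (w : List Letter) : Prop :=
  ∀ p ∈ lvlsR β 0 w, 0 ≤ p.2

lemma mem_lvls (β a : ℝ) (u : List Letter) (x : Letter × ℝ) (hx : x ∈ lvlsR β a u) :
    ∃ s : List Letter, s ≠ [] ∧ s <+: u ∧ x.2 = a + (s.map (wtR β)).sum := by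
  induction u generalizing a with
  | nil => simp [lvlsR] at hx
  | cons c u ih =>
    simp only [lvlsR, List.mem_cons] at hx
    rcases hx with h | h
    · exact ⟨[c], by simp, ⟨u, rfl⟩, by simp [h]⟩
    · obtain ⟨s, hs0, ⟨rest, hrest⟩, hsv⟩ := ih (a + wtR β c) h
      exact ⟨c :: s, by simp, ⟨rest, by simp [hrest]⟩, by simp [hsv]; ring⟩

lemma sum_wt (β : ℝ) (u : List Letter) :
    (u.map (wtR β)).sum = (u.count Letter.N : ℝ) - β * (u.count Letter.E) := by
  induction u with
  | nil => simp
  | cons c u ih =>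
    cases c <;> simp [wtR, ih, List.count_cons] <;> push_cast <;> ring

lemma count_len (u : List Letter) :
    u.count Letter.N + u.count Letter.E = u.length := by
  induction u with
  | nil => simp
  | cons c u ih => cases c <;> simp [List.count_cons] <;> omega

lemma sum_wt_ne (β : ℝ) (hβ : Irrational β) (u : List Letter) (hu : u ≠ []) :
    (u.map (wtR β)).sum ≠ 0 := by
  rw [sum_wt]
  intro h
  rcases Nat.eq_zero_or_pos (u.count Letter.E) with hE | hE
  · have hlen : u.length ≠ 0 := by simpa using hu
    have hN : u.count Letter.N ≠ 0 := by have := count_len u; omega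
    rw [hE] at h
    simp at h
    exact hN (by exact_mod_cast h)
  · have hEne : ((u.count Letter.E : ℝ)) ≠ 0 := by positivity
    have hb : β = (u.count Letter.N : ℝ) / (u.count Letter.E : ℝ) := by
      field_simp
      linarith
    have : β = (((u.count Letter.N : ℚ) / (u.count Letter.E : ℚ) : ℚ) : ℝ) := by
      push_cast
      exact hb
    exact (this ▸ hβ) ⟨_, rfl⟩

lemma lvls_snd_nodup (β : ℝ) (hβ : Irrational β) (a : ℝ) (u : List Letter) :
    ((lvlsR β a u).map Prod.snd).Nodup := by
  induction u generalizing a with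
  | nil => simp [lvlsR]
  | cons c u ih =>
    simp only [lvlsR, List.map_cons, List.nodup_cons]
    refine ⟨?_, ih _⟩
    intro hmem
    obtain ⟨x, hx, hxe⟩ := List.mem_map.mp hmem
    obtain ⟨s, hs0, _, hsv⟩ := mem_lvls β (a + wtR β c) u x hx
    have hne := sum_wt_ne β hβ s hs0
    rw [hxe] at hsv
    have : (s.map (wtR β)).sum = 0 := by linarith
    exact hne this

lemma key_invariant (β t : ℝ) (u : List Letter) : ∀ a : ℝ,
    min (t - a) 0 ≤
      (((lvlsR β a u).filter (fun x => decide (t ≤ x.2))).map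
        (fun x => wtR β x.1)).sum := by
  induction u with
  | nil => intro a; simpa [lvlsR] using min_le_right (t - a) 0
  | cons c u ih =>
    intro a
    have h2 := ih (a + wtR β c)
    simp only [lvlsR, List.filter_cons]
    by_cases h : t ≤ a + wtR β c
    · rw [if_pos (by simpa using h)]
      simp only [List.map_cons, List.sum_cons]
      rcases min_cases (t - (a + wtR β c)) 0 with ⟨he, hc⟩ | ⟨he, hc⟩ <;>
        rw [he] at h2 <;>
        [skip; skip] <;>
        nlinarith [min_le_left (t - a) (0 : ℝ), min_le_right (t - a) (0 : ℝ)]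
    · rw [if_neg (by simpa using h)]
      have hmin : min (t - (a + wtR β c)) 0 = 0 := by
        apply min_eq_right
        push_neg at h
        linarith
      rw [hmin] at h2
      have := min_le_right (t - a) (0 : ℝ)
      linarith

lemma exists_min_snd (l : List (Letter × ℝ)) (h : l ≠ []) :
    ∃ z ∈ l, ∀ x ∈ l, z.2 ≤ x.2 := by
  induction l with
  | nil => simp at h
  | cons a l ih =>
    rcases eq_or_ne l [] with rfl | hl
    · exact ⟨a, by simp, by simp⟩
    · obtain ⟨z, hz, hzm⟩ := ih hl
      rcases le_total a.2 z.2 with h' | h'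
      · refine ⟨a, by simp, ?_⟩
        intro x hx
        rcases List.mem_cons.mp hx with rfl | hx
        · exact le_refl _
        · exact le_trans h' (hzm x hx)
      · refine ⟨z, List.mem_cons_of_mem _ hz, ?_⟩
        intro x hx
        rcases List.mem_cons.mp hx with rfl | hx
        · exact h'
        · exact hzm x hx

lemma negBefore_trans (a b c : ℝ) (h1 : negBeforeR a b = true)
    (h2 : negBeforeR b c = true) : negBeforeR a c = true := by
  unfold negBeforeR at *
  split_ifs at * <;> simp_all <;> linarith

lemma negBefore_total (a b : ℝ) : (negBeforeR a b || negBeforeR b a) = true := by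
  unfold negBeforeR
  split_ifs <;> simp_all <;> rcases le_total a b with h | h <;> simp [h] <;> linarith

lemma negBefore_nonneg (a b : ℝ) (ha : 0 ≤ a) (hb : 0 ≤ b)
    (h : negBeforeR a b = true) : b ≤ a := by
  unfold negBeforeR at h
  rw [if_neg (not_lt.mpr ha), if_neg (not_lt.mpr hb)] at h
  exact of_decide_eq_true h

/-- If `β` is irrational and `w` is a `β`-Dyck word, then `sw_β(w)` is a `β`-Dyck word. -/
theorem sweepR_isDyckWordR (β : ℝ) (hβ : Irrational β) (w : List Letter)
    (hw : IsDyckWordR β w) : IsDyckWordR β (sweepR β w) := by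
  intro p hp
  set r : Letter × ℝ → Letter × ℝ → Bool := fun x y => negBeforeR x.2 y.2 with hr
  set L : List (Letter × ℝ) := lvlsR β 0 w with hL
  set M : List (Letter × ℝ) := L.mergeSort r with hM
  have hperm : M.Perm L := List.mergeSort_perm L r
  have hsort : M.Pairwise (fun x y => r x y = true) :=
    List.pairwise_mergeSort (le := r)
      (fun x y z h1 h2 => negBefore_trans _ _ _ h1 h2)
      (fun x y => negBefore_total _ _) L
  have hnonneg : ∀ x ∈ M, 0 ≤ x.2 := fun x hx => hw x (hperm.mem_iff.mp hx)
  have hnd : (M.map Prod.snd).Nodup :=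
    ((hperm.map Prod.snd).nodup_iff).mpr (lvls_snd_nodup β hβ 0 w)
  obtain ⟨s, hs0, hspre, hps⟩ := mem_lvls β 0 (sweepR β w) p hp
  rw [hps]
  have hsw : sweepR β w = M.map Prod.fst := rfl
  set k := s.length with hk
  have hs_take : s = (M.take k).map Prod.fst := by
    have h1 := List.prefix_iff_eq_take.mp hspre
    rw [hsw] at h1
    rw [h1, List.map_take]
  have hp' : M.take k ≠ [] := by
    intro h
    rw [hs_take, h] at hs0
    simp at hs0
  obtain ⟨z, hz, hzmin⟩ := exists_min_snd (M.take k) hp'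
  have hz_M : z ∈ M := List.take_subset k M hz
  have ht0 : (0 : ℝ) ≤ z.2 := hnonneg z hz_M
  set P : Letter × ℝ → Bool := fun x => decide (z.2 ≤ x.2) with hP
  have hMsplit : M = M.take k ++ M.drop k := (List.take_append_drop k M).symm
  have hpair : ∀ x ∈ M.take k, ∀ y ∈ M.drop k, r x y = true := by
    have := hsort
    rw [hMsplit] at this
    exact (List.pairwise_append.mp this).2.2
  have hdisj : ((M.take k).map Prod.snd).Disjoint ((M.drop k).map Prod.snd) := by
    have := hnd
    rw [hMsplit, List.map_append] at this
    exact (List.nodup_append'.mp this).2.2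
  have hfilter : M.filter P = M.take k := by
    conv_lhs => rw [hMsplit]
    rw [List.filter_append]
    have h1 : (M.take k).filter P = M.take k := by
      apply List.filter_eq_self.mpr
      intro x hx
      exact decide_eq_true (hzmin x hx)
    have h2 : (M.drop k).filter P = [] := by
      apply List.filter_eq_nil_iff.mpr
      intro y hy
      have hy_M : y ∈ M := List.drop_subset k M hy
      have hle : y.2 ≤ z.2 :=
        negBefore_nonneg z.2 y.2 (hnonneg z hz_M) (hnonneg y hy_M) (hpair z hz y hy)
      have hne : z.2 ≠ y.2 := by
        intro hzy
        exact hdisj (List.mem_map_of_mem (f := Prod.snd) hz) (hzy ▸ List.mem_map_of_mem (f := Prod.snd) hy)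
      simp only [hP, decide_eq_true_eq, not_le]
      exact lt_of_le_of_ne hle (fun h => hne h.symm)
    rw [h1, h2, List.append_nil]
  have hsum : (s.map (wtR β)).sum = ((L.filter P).map (fun x => wtR β x.1)).sum := by
    rw [hs_take, List.map_take, ← List.map_take, List.map_map, ← hfilter]
    exact ((hperm.filter P).map (fun x => wtR β x.1)).sum_eq
  have hkey := key_invariant β z.2 w 0
  have hmin0 : min (z.2 - 0) 0 = 0 := by
    rw [sub_zero]
    exact min_eq_right ht0
  rw [hmin0] at hkey
  have : (0 : ℝ) ≤ (s.map (wtR β)).sum := by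
    rw [hsum]
    exact hkey
  linarith
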